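/- Let b > 0, n ≥ 6, and φ(ρ) = a(ρ² + b)^{−1/2} for some a > 0. The function ϱ(ρ) = (ρ² + b)^{−3/2} satisfies the eigenvalue equation Lϱ(|x|) = ϱ(|x|) for the linearized operator, i.e., Δ_x ϱ(|x|) − (1/2) x·∇_x ϱ(|x|) − (1/2)ϱ(|x|) + V(x)ϱ(|x|) = ϱ(|x|) on ℝⁿ ∖ {0}, where V(x) = 3(n−3)(2αφ(|x|)² − 5β|x|²φ(|x|)⁴), provided a, b, α, β are related by a = 1+γ, b = 2γ(2+γ)((n−3)(1+γ)² − 3)/(1+γ)², α = 3/(2(n−3)(1+γ)⁴) + 1/2, β = 1/((n−3)(1+γ)⁴), with 0 < γ < √2 − 1. -/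

import Mathlib

noncomputable section

/-- The Laplacian of a real-valued function on ℝⁿ, in coordinates. -/
def lapR (n : ℕ) (F : EuclideanSpace ℝ (Fin n) → ℝ) (x : EuclideanSpace ℝ (Fin n)) : ℝ :=
  ∑ i : Fin n, fderiv ℝ (fun y => fderiv ℝ F y (EuclideanSpace.single i 1)) x
    (EuclideanSpace.single i 1)

end

section Aux

variable {n : ℕ} {b : ℝ}

private lemma aux_base (x : EuclideanSpace ℝ (Fin n)) :
    HasFDerivAt (fun y : EuclideanSpace ℝ (Fin n) => ‖y‖ ^ 2 + b)
      (2 • innerSL ℝ x) x :=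
  ((hasStrictFDerivAt_norm_sq x).hasFDerivAt).add_const b

private lemma auxF (hb : 0 < b) (x : EuclideanSpace ℝ (Fin n)) :
    HasFDerivAt (fun y : EuclideanSpace ℝ (Fin n) => (‖y‖ ^ 2 + b) ^ (-(3:ℝ)/2))
      (((-(3:ℝ)/2) * (‖x‖ ^ 2 + b) ^ (-(3:ℝ)/2 - 1)) • (2 • innerSL ℝ x)) x := by
  have hu : (0:ℝ) < ‖x‖ ^ 2 + b := by positivity
  exact (Real.hasDerivAt_rpow_const (x := ‖x‖ ^ 2 + b) (p := -(3:ℝ)/2)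
    (Or.inl hu.ne')).comp_hasFDerivAt x (aux_base x)

private lemma auxG (hb : 0 < b) (x : EuclideanSpace ℝ (Fin n)) :
    HasFDerivAt (fun y : EuclideanSpace ℝ (Fin n) =>
        (-(3:ℝ)/2) * (‖y‖ ^ 2 + b) ^ (-(3:ℝ)/2 - 1))
      (((-(3:ℝ)/2) * ((-(3:ℝ)/2 - 1) * (‖x‖ ^ 2 + b) ^ (-(3:ℝ)/2 - 1 - 1))) •
        (2 • innerSL ℝ x)) x := by
  have hu : (0:ℝ) < ‖x‖ ^ 2 + b := by positivity
  exact ((Real.hasDerivAt_rpow_const (x := ‖x‖ ^ 2 + b) (p := -(3:ℝ)/2 - 1)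
    (Or.inl hu.ne')).const_mul (-(3:ℝ)/2)).comp_hasFDerivAt
    (f := fun y : EuclideanSpace ℝ (Fin n) => ‖y‖ ^ 2 + b) x (aux_base x)

private lemma scalar_key (nr s A a b α β : ℝ)
    (f1 : (nr - 3) * β * a ^ 4 = 1)
    (f2 : 2 * (nr - 3) * α * a ^ 2 = nr + b / 2)
    (hu0 : s + b ≠ 0) :
    2 * nr * (-(3:ℝ)/2 * (A / (s + b)))
      + 4 * (-(3:ℝ)/2 * ((-(3:ℝ)/2 - 1) * (A / (s + b) / (s + b)))) * s
      - 1/2 * (-(3:ℝ)/2 * (A / (s + b)) * (2 * s)) - 1/2 * A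
      + 3 * (nr - 3) * (2 * α * (a ^ 2 / (s + b)) - 5 * β * s * (a ^ 4 / (s + b) ^ 2)) * A
      = A := by
  have hv : (s + b) * (s + b)⁻¹ = 1 := mul_inv_cancel₀ hu0
  simp only [div_eq_mul_inv, ← inv_pow]
  linear_combination (3 * A * (s + b)⁻¹) * f2 - (15 * A * s * ((s + b)⁻¹) ^ 2) * f1
    + (3 / 2 * A) * hv

end Aux

/-- ϱ(|x|) = (|x|²+b)^{−3/2} is an eigenfunction with eigenvalue 1 of the linearized
operator L = Δ − (1/2)x·∇ − 1/2 + V around the shrinker profile φ. -/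
theorem eigenvalue_one_eigenfunction
    (n : ℕ) (hn : 6 ≤ n) (γ : ℝ) (hγ0 : 0 < γ) (hγ1 : γ < Real.sqrt 2 - 1)
    (a b α β : ℝ)
    (ha : a = 1 + γ)
    (hb : b = 2 * γ * (2 + γ) * (((n : ℝ) - 3) * (1 + γ) ^ 2 - 3) / (1 + γ) ^ 2)
    (hα : α = 3 / (2 * ((n : ℝ) - 3) * (1 + γ) ^ 4) + 1 / 2)
    (hβ : β = 1 / (((n : ℝ) - 3) * (1 + γ) ^ 4))
    (φ : ℝ → ℝ) (hφ : ∀ ρ, φ ρ = a / Real.sqrt (ρ ^ 2 + b))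
    (V : EuclideanSpace ℝ (Fin n) → ℝ)
    (hV : ∀ x, V x = 3 * ((n : ℝ) - 3) *
      (2 * α * (φ ‖x‖) ^ 2 - 5 * β * ‖x‖ ^ 2 * (φ ‖x‖) ^ 4))
    (F : EuclideanSpace ℝ (Fin n) → ℝ)
    (hF : ∀ x, F x = (‖x‖ ^ 2 + b) ^ (-(3 : ℝ) / 2)) :
    ∀ x : EuclideanSpace ℝ (Fin n), x ≠ 0 →
      lapR n F x - (1 / 2) * fderiv ℝ F x x - (1 / 2) * F x + V x * F x = F x := by
  have hnr : (6:ℝ) ≤ (n:ℝ) := by exact_mod_cast hn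
  have hg1 : (0:ℝ) < 1 + γ := by linarith
  have h1 : (1 + γ) ≠ 0 := hg1.ne'
  have h2 : ((n:ℝ) - 3) ≠ 0 := by linarith
  have hb0 : 0 < b := by
    have h3 : (0:ℝ) < ((n:ℝ) - 3) * (1 + γ) ^ 2 - 3 := by nlinarith [sq_nonneg γ]
    rw [hb]
    exact div_pos (mul_pos (mul_pos (by linarith) (by linarith)) h3) (by positivity)
  -- the key algebraic identities
  have f1 : ((n:ℝ) - 3) * β * a ^ 4 = 1 := by
    rw [hβ, ha]; field_simp
  have f2 : 2 * ((n:ℝ) - 3) * α * a ^ 2 = (n:ℝ) + b / 2 := by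
    rw [hα, ha, hb]; field_simp; ring
  have hFeq : F = fun y : EuclideanSpace ℝ (Fin n) => (‖y‖ ^ 2 + b) ^ (-(3:ℝ)/2) :=
    funext hF
  subst hFeq
  intro x hx
  have hu : (0:ℝ) < ‖x‖ ^ 2 + b := by positivity
  have hsum : ∑ i : Fin n, x i ^ 2 = ‖x‖ ^ 2 := by
    rw [EuclideanSpace.norm_eq, Real.sq_sqrt (by positivity)]
    simp [sq_abs]
  -- first derivative
  have hfd : ∀ y : EuclideanSpace ℝ (Fin n),
      fderiv ℝ (fun y : EuclideanSpace ℝ (Fin n) => (‖y‖ ^ 2 + b) ^ (-(3:ℝ)/2)) y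
      = ((-(3:ℝ)/2) * (‖y‖ ^ 2 + b) ^ (-(3:ℝ)/2 - 1)) • (2 • innerSL ℝ y) :=
    fun y => (auxF hb0 y).fderiv
  -- radial derivative term
  have hgrad : fderiv ℝ (fun y : EuclideanSpace ℝ (Fin n) => (‖y‖ ^ 2 + b) ^ (-(3:ℝ)/2)) x x
      = ((-(3:ℝ)/2) * (‖x‖ ^ 2 + b) ^ (-(3:ℝ)/2 - 1)) * (2 * ‖x‖ ^ 2) := by
    rw [hfd x]
    simp only [ContinuousLinearMap.smul_apply, innerSL_apply_apply, smul_eq_mul, nsmul_eq_mul,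
      Nat.cast_ofNat, real_inner_self_eq_norm_sq]
  -- Laplacian
  have hlap : lapR n (fun y : EuclideanSpace ℝ (Fin n) => (‖y‖ ^ 2 + b) ^ (-(3:ℝ)/2)) x
      = 2 * (n:ℝ) * ((-(3:ℝ)/2) * (‖x‖ ^ 2 + b) ^ (-(3:ℝ)/2 - 1))
        + 4 * ((-(3:ℝ)/2) * ((-(3:ℝ)/2 - 1) * (‖x‖ ^ 2 + b) ^ (-(3:ℝ)/2 - 1 - 1))) * ‖x‖ ^ 2 := by
    unfold lapR
    have hterm : ∀ i : Fin n,
        fderiv ℝ (fun y => fderiv ℝ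
            (fun y : EuclideanSpace ℝ (Fin n) => (‖y‖ ^ 2 + b) ^ (-(3:ℝ)/2)) y
            (EuclideanSpace.single i 1)) x (EuclideanSpace.single i 1)
        = 2 * ((-(3:ℝ)/2) * (‖x‖ ^ 2 + b) ^ (-(3:ℝ)/2 - 1))
          + 4 * ((-(3:ℝ)/2) * ((-(3:ℝ)/2 - 1) * (‖x‖ ^ 2 + b) ^ (-(3:ℝ)/2 - 1 - 1))) * (x i) ^ 2 := by
      intro i
      set L : EuclideanSpace ℝ (Fin n) →L[ℝ] ℝ :=
        (2:ℝ) • innerSL ℝ (EuclideanSpace.single i (1:ℝ)) with hL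
      have heq : (fun y => fderiv ℝ
            (fun y : EuclideanSpace ℝ (Fin n) => (‖y‖ ^ 2 + b) ^ (-(3:ℝ)/2)) y
            (EuclideanSpace.single i 1))
          = fun y : EuclideanSpace ℝ (Fin n) =>
              ((-(3:ℝ)/2) * (‖y‖ ^ 2 + b) ^ (-(3:ℝ)/2 - 1)) * L y := by
        funext y
        rw [hfd y]
        simp only [hL, ContinuousLinearMap.smul_apply, innerSL_apply_apply, smul_eq_mul,
          nsmul_eq_mul, Nat.cast_ofNat]
        rw [real_inner_comm]
      rw [heq]
      have hmul : HasFDerivAt (fun y : EuclideanSpace ℝ (Fin n) =>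
          (-(3:ℝ)/2) * (‖y‖ ^ 2 + b) ^ (-(3:ℝ)/2 - 1) * L y) _ x :=
        (auxG hb0 x).mul L.hasFDerivAt
      rw [hmul.fderiv]
      simp only [hL, ContinuousLinearMap.add_apply, ContinuousLinearMap.smul_apply,
        innerSL_apply_apply, smul_eq_mul, nsmul_eq_mul, Nat.cast_ofNat,
        EuclideanSpace.inner_single_left, EuclideanSpace.inner_single_right,
        EuclideanSpace.single_apply, map_one, conj_trivial]
      simp
      ring
    rw [Finset.sum_congr rfl (fun i _ => hterm i)]
    rw [Finset.sum_add_distrib, Finset.sum_const, Finset.card_univ, Fintype.card_fin]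
    rw [← Finset.mul_sum, hsum]
    push_cast
    ring
  rw [hlap, hgrad, hV x, hφ ‖x‖]
  -- convert rpow exponents
  have e1 : (‖x‖ ^ 2 + b) ^ (-(3:ℝ)/2 - 1) = (‖x‖ ^ 2 + b) ^ (-(3:ℝ)/2) / (‖x‖ ^ 2 + b) := by
    rw [Real.rpow_sub hu, Real.rpow_one]
  have e2 : (‖x‖ ^ 2 + b) ^ (-(3:ℝ)/2 - 1 - 1)
      = (‖x‖ ^ 2 + b) ^ (-(3:ℝ)/2) / (‖x‖ ^ 2 + b) / (‖x‖ ^ 2 + b) := by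
    rw [Real.rpow_sub hu, Real.rpow_sub hu, Real.rpow_one]
  have hφ2 : (a / Real.sqrt (‖x‖ ^ 2 + b)) ^ 2 = a ^ 2 / (‖x‖ ^ 2 + b) := by
    rw [div_pow, Real.sq_sqrt hu.le]
  have hφ4 : (a / Real.sqrt (‖x‖ ^ 2 + b)) ^ 4 = a ^ 4 / (‖x‖ ^ 2 + b) ^ 2 := by
    rw [div_pow]
    congr 1
    have h4 : (Real.sqrt (‖x‖ ^ 2 + b)) ^ 4 = ((Real.sqrt (‖x‖ ^ 2 + b)) ^ 2) ^ 2 := by ring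
    rw [h4, Real.sq_sqrt hu.le]
  rw [e1, e2, hφ2, hφ4]
  linear_combination scalar_key (n:ℝ) (‖x‖ ^ 2) ((‖x‖ ^ 2 + b) ^ (-(3:ℝ)/2)) a b α β f1 f2 hu.ne'
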